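/- Let V be a finite set of vertices, each vertex v having an open uncertainty interval I_v = (L_v, U_v) ⊆ ℝ and a precise weight w_v ∈ I_v. Let S ⊆ V be a hyperedge. If v ∈ S is a vertex of minimum weight in S and there exists u ∈ S \ {v} with w_u ∈ I_v, then every query set Q ⊆ V that allows determining a minimum-weight vertex of S (i.e., after replacing I_q by {w_q} for all q ∈ Q, some vertex of S has an interval lying weakly below all other intervals of S) must contain v. -/
import Mathlib


open Finset

/-- Lower endpoint of vertex `v`'s interval after querying the set `Q`. -/
def qlo {V : Type*} [DecidableEq V] (L w : V → ℝ) (Q : Finset V) (v : V) : ℝ :=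
  if v ∈ Q then w v else L v

/-- Upper endpoint of vertex `v`'s interval after querying the set `Q`. -/
def qhi {V : Type*} [DecidableEq V] (U w : V → ℝ) (Q : Finset V) (v : V) : ℝ :=
  if v ∈ Q then w v else U v

/-- The query set `Q` suffices to orient the hyperedge `S`: some vertex of `S`
has its (updated) interval weakly below all other (updated) intervals of `S`. -/
def Solves {V : Type*} [DecidableEq V] (L U w : V → ℝ) (Q : Finset V) (S : Finset V) : Prop :=
  ∃ m ∈ S, ∀ u ∈ S, u ≠ m → qhi U w Q m ≤ qlo L w Q u

theorem stmt0 {V : Type*} [DecidableEq V] (L U w : V → ℝ)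
    (hw : ∀ x : V, w x ∈ Set.Ioo (L x) (U x))
    (S : Finset V) (v : V) (hvS : v ∈ S)
    (hmin : ∀ x ∈ S, w v ≤ w x)
    (hu : ∃ u ∈ S, u ≠ v ∧ w u ∈ Set.Ioo (L v) (U v)) :
    ∀ Q : Finset V, Solves L U w Q S → v ∈ Q := by
  intro Q hQ
  by_contra hvQ
  obtain ⟨m, hmS, hm⟩ := hQ
  obtain ⟨u, huS, huv, hLu, hUu⟩ := hu
  by_cases hmv : m = v
  · subst hmv
    have h := hm u huS huv
    have h1 : qhi U w Q m = U m := by simp [qhi, hvQ]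
    have h2 : qlo L w Q u ≤ w u := by
      unfold qlo; split
      · exact le_refl _
      · exact (hw u).1.le
    linarith
  · have h := hm v hvS (fun e => hmv e.symm)
    have h1 : qlo L w Q v = L v := by simp [qlo, hvQ]
    have h2 : w m ≤ qhi U w Q m := by
      unfold qhi; split
      · exact le_refl _
      · exact (hw m).2.le
    have := hmin m hmS
    have := (hw v).1
    linarith
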